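/- Let l ≥ 1 and let A = ℂ[a_1,…,a_l,b] be a polynomial ring. Define c_0, …, c_{2l} ∈ A by the identity (a_1 u^l + a_2 u^{l−1} + … + a_l u + b)² = Σ_{k=0}^{2l} c_k u^{2l−k} in A[u] (so c_0 = a_1² and c_{2l} = b²). Let R be the ℂ-subalgebra of A generated by c_0, c_1, …, c_{2l−1} together with b. Then R and A have the same field of fractions ℂ(a_1,…,a_l,b), A is integral over R, and A is the integral closure of R in this fraction field. -/

import Mathlib

set_option maxHeartbeats 1000000
set_option synthInstance.maxHeartbeats 1000000


/-- The polynomial `a₁ u^l + a₂ u^{l-1} + ⋯ + a_l u + b` over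
`A = ℂ[a₁, …, a_l, b]`, where the variables `a₁, …, a_l` are `X 0, …, X (l-1)` and
`b` is `X l`. -/
noncomputable def genPoly (l : ℕ) : Polynomial (MvPolynomial (Fin (l + 1)) ℂ) :=
  ∑ k : Fin (l + 1), Polynomial.C (MvPolynomial.X k) * Polynomial.X ^ (l - (k : ℕ))

/-- `c_k`, the coefficient of `u^{2l-k}` in `(a₁ u^l + ⋯ + a_l u + b)²`,
so that `c 0 = a₁²` and `c (2l) = b²`. -/
noncomputable def cOf (l : ℕ) (k : ℕ) : MvPolynomial (Fin (l + 1)) ℂ :=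
  ((genPoly l) ^ 2).coeff (2 * l - k)

/-- The subalgebra `R` of `A = ℂ[a₁,…,a_l,b]` generated by `c₀, c₁, …, c_{2l-1}`
together with `b`. -/
noncomputable def subR (l : ℕ) : Subalgebra ℂ (MvPolynomial (Fin (l + 1)) ℂ) :=
  Algebra.adjoin ℂ ((cOf l '' Set.Iic (2 * l - 1)) ∪ {MvPolynomial.X (Fin.last l)})

open Polynomial MvPolynomial

lemma genPoly_coeff (l : ℕ) (d : ℕ) (hd : d ≤ l) :
    (genPoly l).coeff d = MvPolynomial.X (⟨l - d, by omega⟩ : Fin (l + 1)) := by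
  rw [genPoly, Polynomial.finset_sum_coeff]
  rw [Finset.sum_eq_single (⟨l - d, by omega⟩ : Fin (l + 1))]
  · simp [Polynomial.coeff_C_mul, Polynomial.coeff_X_pow]
    intro h; omega
  · intro k _ hk
    simp only [Polynomial.coeff_C_mul, Polynomial.coeff_X_pow]
    have : ¬ (d = l - (k : ℕ)) := by
      intro h; apply hk; ext; simp; omega
    simp [this]
  · simp

lemma genPoly_coeff_zero (l : ℕ) (d : ℕ) (hd : l < d) : (genPoly l).coeff d = 0 := by
  rw [genPoly, Polynomial.finset_sum_coeff]
  apply Finset.sum_eq_zero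
  intro k _
  simp only [Polynomial.coeff_C_mul, Polynomial.coeff_X_pow]
  have : ¬ (d = l - (k : ℕ)) := by omega
  simp [this]

lemma genPoly_natDegree_le (l : ℕ) : (genPoly l).natDegree ≤ l := by
  apply Polynomial.natDegree_le_iff_coeff_eq_zero.2
  intro m hm
  exact genPoly_coeff_zero l m hm

lemma genPoly_sq_coeff (l : ℕ) (d : ℕ) :
    ((genPoly l) ^ 2).coeff d
      = ∑ i : Fin (l + 1), ∑ j : Fin (l + 1),
          if (l - (i : ℕ)) + (l - (j : ℕ)) = d then X i * X j else 0 := by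
  rw [sq, genPoly, Finset.sum_mul_sum]
  rw [Polynomial.finset_sum_coeff]
  refine Finset.sum_congr rfl fun i _ => ?_
  rw [Polynomial.finset_sum_coeff]
  refine Finset.sum_congr rfl fun j _ => ?_
  rw [mul_mul_mul_comm, ← Polynomial.C_mul, ← pow_add, Polynomial.coeff_C_mul,
    Polynomial.coeff_X_pow]
  split <;> rename_i h <;> simp [eq_comm, h]

lemma b_mem_subR (l : ℕ) : MvPolynomial.X (Fin.last l) ∈ subR l :=
  Algebra.subset_adjoin (Set.mem_union_right _ rfl)

lemma cOf_mem_subR (l : ℕ) (k : ℕ) (hk : k ≤ 2 * l - 1) : cOf l k ∈ subR l :=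
  Algebra.subset_adjoin (Set.mem_union_left _ ⟨k, hk, rfl⟩)

lemma genPoly_sq_coeff_mem (l : ℕ) (hl : 1 ≤ l) (d : ℕ) :
    ((genPoly l) ^ 2).coeff d ∈ subR l := by
  rcases Nat.eq_zero_or_pos d with rfl | hd
  · -- constant coefficient is b ^ 2
    have : ((genPoly l) ^ 2).coeff 0 = (MvPolynomial.X (Fin.last l)) ^ 2 := by
      rw [genPoly_sq_coeff]
      rw [Finset.sum_eq_single (Fin.last l)]
      · rw [Finset.sum_eq_single (Fin.last l)]
        · simp [sq]
        · intro j _ hj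
          have h2 : (j:ℕ) < l := by
            have := j.2
            rcases lt_or_eq_of_le (Nat.lt_succ_iff.mp this) with h | h
            · exact h
            · exact absurd (by ext; simp [Fin.last, h]) hj
          have : ¬ (l - ((Fin.last l : Fin (l+1)) : ℕ)) + (l - (j : ℕ)) = 0 := by
            simp [Fin.last]; omega
          simp only [this, if_false]
        · simp
      · intro i _ hi
        apply Finset.sum_eq_zero
        intro j _
        have : ¬ (l - (i : ℕ)) + (l - (j : ℕ)) = 0 := by
          have := i.2; have : (i:ℕ) ≠ l := by
            intro h; apply hi; ext; simp [Fin.last, h]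
          omega
        simp only [this, if_false]
      · simp
    rw [this]
    exact pow_mem (b_mem_subR l) 2
  · rcases le_or_gt d (2 * l) with hdl | hdl
    · have : ((genPoly l) ^ 2).coeff d = cOf l (2 * l - d) := by
        rw [cOf]; congr 1; omega
      rw [this]
      exact cOf_mem_subR l _ (by omega)
    · have : ((genPoly l) ^ 2).coeff d = 0 := by
        apply Polynomial.coeff_eq_zero_of_natDegree_lt
        calc ((genPoly l) ^ 2).natDegree ≤ 2 * (genPoly l).natDegree := by
              simpa [two_mul] using Polynomial.natDegree_pow_le (p := genPoly l) (n := 2)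
          _ ≤ 2 * l := by have := genPoly_natDegree_le l; omega
          _ < d := hdl
      rw [this]; exact zero_mem _

lemma cOf_eq (l : ℕ) (m : ℕ) (hm : m ≤ l) :
    cOf l m = ∑ i : Fin (l + 1), ∑ j : Fin (l + 1),
        if (i : ℕ) + (j : ℕ) = m then X i * X j else 0 := by
  rw [cOf, genPoly_sq_coeff]
  refine Finset.sum_congr rfl fun i _ => Finset.sum_congr rfl fun j _ => ?_
  have hi := i.2; have hj := j.2
  have : ((l - (i:ℕ)) + (l - (j:ℕ)) = 2 * l - m) ↔ ((i:ℕ) + (j:ℕ) = m) := by omega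
  simp only [this]

section Integral

variable (l : ℕ)

local notation "Amv" => MvPolynomial (Fin (l + 1)) ℂ
local notation "K" => FractionRing (MvPolynomial (Fin (l + 1)) ℂ)

set_option synthInstance.maxHeartbeats 1000000

open Polynomial in
lemma isIntegral_X (hl : 1 ≤ l) (k : Fin (l + 1)) :
    IsIntegral (subR l) (MvPolynomial.X k : Amv) := by
  classical
  set S := subR l with hS
  -- the monic polynomial X^(2(l+1)) - f^2 has coefficients in S
  set M : Polynomial Amv := Polynomial.X ^ (2 * (l + 1)) - (genPoly l) ^ 2 with hM
  have hMlifts : M ∈ Polynomial.lifts (algebraMap S Amv) := by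
    rw [Polynomial.lifts_iff_coeff_lifts]
    intro n
    have : M.coeff n ∈ S := by
      rw [hM, Polynomial.coeff_sub]
      exact sub_mem (by rw [Polynomial.coeff_X_pow]
                        split
                        · exact one_mem S
                        · exact zero_mem S)
        (genPoly_sq_coeff_mem l hl n)
    exact ⟨⟨M.coeff n, this⟩, by simp [Subalgebra.algebraMap_eq]⟩
  have hdegsq : ((genPoly l) ^ 2).degree < (2 * (l + 1) : ℕ) := by
    apply lt_of_le_of_lt (Polynomial.degree_le_natDegree)
    have h1 : ((genPoly l) ^ 2).natDegree ≤ 2 * l := by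
      refine le_trans (Polynomial.natDegree_pow_le) ?_
      have := genPoly_natDegree_le l; omega
    have h2 : ((2 * l : ℕ) : WithBot ℕ) < ((2 * (l + 1) : ℕ) : WithBot ℕ) :=
      Nat.cast_lt.mpr (by omega)
    exact lt_of_le_of_lt (Nat.cast_le.mpr h1) h2
  have hMmonic : M.Monic := Polynomial.monic_X_pow_sub hdegsq
  obtain ⟨P, hPmap, _, hPmonic⟩ :=
    Polynomial.lifts_and_degree_eq_and_monic hMlifts hMmonic
  -- the monic polynomial g = X^(l+1) - f over K divides M over K
  set fK : Polynomial K := (genPoly l).map (algebraMap Amv K) with hfK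
  set g : Polynomial K := Polynomial.X ^ (l + 1) - fK with hg
  have hdegfK : fK.degree < ((l + 1 : ℕ) : WithBot ℕ) := by
    apply lt_of_le_of_lt (Polynomial.degree_map_le)
    apply lt_of_le_of_lt (Polynomial.degree_le_natDegree)
    exact Nat.cast_lt.mpr (Nat.lt_succ_of_le (genPoly_natDegree_le l))
  have hgmonic : g.Monic := Polynomial.monic_X_pow_sub hdegfK
  have hmapeq : P.map (algebraMap S K) = M.map (algebraMap Amv K) := by
    rw [IsScalarTower.algebraMap_eq S Amv K, ← Polynomial.map_map, hPmap]
  have hdvd : g ∣ P.map (algebraMap S K) := by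
    rw [hmapeq]
    refine ⟨Polynomial.X ^ (l + 1) + fK, ?_⟩
    rw [hM]
    push_cast [Polynomial.map_sub, Polynomial.map_pow, Polynomial.map_X, hg]
    ring
  have hlift := integralClosure.mem_lifts_of_monic_of_dvd_map (R := S) K hPmonic hgmonic hdvd
  rw [Polynomial.lifts_iff_coeff_lifts] at hlift
  have hcoeff := hlift (l - (k : ℕ))
  have hk' : l - (k : ℕ) ≤ l := by omega
  have hgc : g.coeff (l - (k : ℕ)) = - algebraMap Amv K (MvPolynomial.X k) := by
    rw [hg, Polynomial.coeff_sub, Polynomial.coeff_X_pow]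
    have h1 : ¬ (l - (k : ℕ) = l + 1) := by omega
    rw [Polynomial.coeff_map, genPoly_coeff l _ hk']
    have h2 : (⟨l - (l - (k : ℕ)), by omega⟩ : Fin (l + 1)) = k := by
      ext; simp; have := k.2; omega
    simp [h1, h2]
  rw [hgc] at hcoeff
  obtain ⟨y, hy⟩ := hcoeff
  have hyint : IsIntegral S (- algebraMap Amv K (MvPolynomial.X k)) := by
    rw [← hy]; exact y.2
  have : IsIntegral S (algebraMap Amv K (MvPolynomial.X k)) := by
    simpa using hyint.neg
  exact (isIntegral_algebraMap_iff
    (IsFractionRing.injective Amv K)).mp this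

lemma isIntegral_all (hl : 1 ≤ l) (x : Amv) : IsIntegral (subR l) x := by
  induction x using MvPolynomial.induction_on with
  | C a =>
      have : (MvPolynomial.C a : Amv) ∈ subR l := by
        exact (subR l).algebraMap_mem a
      exact isIntegral_algebraMap (x := (⟨_, this⟩ : subR l))
  | add p q hp hq => exact hp.add hq
  | mul_X p i hp => exact hp.mul (isIntegral_X l hl i)


/-- The set of elements of `A` expressible as a ratio of elements of `R`. -/
noncomputable def Tring : Subring (MvPolynomial (Fin (l + 1)) ℂ) where
  carrier := {x | ∃ r s : Amv, r ∈ subR l ∧ s ∈ subR l ∧ s ≠ 0 ∧ x * s = r}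
  one_mem' := ⟨1, 1, one_mem _, one_mem _, one_ne_zero, one_mul 1⟩
  zero_mem' := ⟨0, 1, zero_mem _, one_mem _, one_ne_zero, by ring⟩
  add_mem' := by
    rintro x y ⟨r, s, hr, hs, hs0, hx⟩ ⟨r', s', hr', hs', hs0', hy⟩
    exact ⟨r * s' + r' * s, s * s', add_mem (mul_mem hr hs') (mul_mem hr' hs),
      mul_mem hs hs', mul_ne_zero hs0 hs0', by rw [← hx, ← hy]; ring⟩
  mul_mem' := by
    rintro x y ⟨r, s, hr, hs, hs0, hx⟩ ⟨r', s', hr', hs', hs0', hy⟩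
    exact ⟨r * r', s * s', mul_mem hr hr', mul_mem hs hs',
      mul_ne_zero hs0 hs0', by rw [← hx, ← hy]; ring⟩
  neg_mem' := by
    rintro x ⟨r, s, hr, hs, hs0, hx⟩
    exact ⟨-r, s, neg_mem hr, hs, hs0, by rw [← hx]; ring⟩

lemma T_of_mem {x : Amv} (hx : x ∈ subR l) : x ∈ Tring l :=
  ⟨x, 1, hx, one_mem _, one_ne_zero, mul_one x⟩

lemma T_div {x t : Amv} (hxt : x * t ∈ Tring l) (ht : t ∈ Tring l) (ht0 : t ≠ 0) :
    x ∈ Tring l := by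
  obtain ⟨r, s, hr, hs, hs0, h1⟩ := hxt
  obtain ⟨r', s', hr', hs', hs0', h2⟩ := ht
  refine ⟨r * s', s * r', mul_mem hr hs', mul_mem hs hr', ?_, ?_⟩
  · apply mul_ne_zero hs0
    rw [← h2]; exact mul_ne_zero ht0 hs0'
  · rw [← h2, ← h1]; ring

lemma cOf_zero : cOf l 0 = X (0 : Fin (l + 1)) * X (0 : Fin (l + 1)) := by
  rw [cOf_eq l 0 (Nat.zero_le l)]
  rw [Finset.sum_eq_single (0 : Fin (l + 1))]
  · rw [Finset.sum_eq_single (0 : Fin (l + 1))]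
    · simp
    · intro j _ hj
      have : ¬ ((0 : Fin (l+1)) : ℕ) + (j : ℕ) = 0 := by
        simp; intro h; exact hj (by ext; simp [h])
      simp only [this, if_false]
    · simp
  · intro i _ hi
    apply Finset.sum_eq_zero
    intro j _
    have : ¬ ((i : ℕ) + (j : ℕ) = 0) := by
      intro h; exact hi (by ext; simp only [Fin.val_zero]; omega)
    simp only [this, if_false]
  · simp

lemma cOf_split (m : ℕ) (hm1 : 1 ≤ m) (hml : m ≤ l) :
    cOf l m = 2 * (X (0 : Fin (l + 1)) * X (⟨m, by omega⟩ : Fin (l + 1)))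
      + ∑ i : Fin (l + 1), ∑ j : Fin (l + 1),
          if ((i : ℕ) ≠ 0 ∧ (j : ℕ) ≠ 0 ∧ (i : ℕ) + (j : ℕ) = m) then X i * X j else 0 := by
  rw [cOf_eq l m hml]
  have pointwise : ∀ i j : Fin (l + 1),
      (if (i : ℕ) + (j : ℕ) = m then X i * X j else (0 : Amv))
        = (if ((i : ℕ) = 0 ∧ (j : ℕ) = m) then X i * X j else 0)
          + (if ((i : ℕ) = m ∧ (j : ℕ) = 0) then X i * X j else 0)
          + (if ((i : ℕ) ≠ 0 ∧ (j : ℕ) ≠ 0 ∧ (i : ℕ) + (j : ℕ) = m) then X i * X j else 0) := by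
    intro i j
    split_ifs <;> first | (exfalso; omega) | ring
  simp only [pointwise, Finset.sum_add_distrib]
  have e1 : (∑ i : Fin (l + 1), ∑ j : Fin (l + 1),
      if ((i : ℕ) = 0 ∧ (j : ℕ) = m) then X i * X j else (0 : Amv))
        = X (0 : Fin (l + 1)) * X (⟨m, by omega⟩ : Fin (l + 1)) := by
    rw [Finset.sum_eq_single (0 : Fin (l + 1))]
    · rw [Finset.sum_eq_single (⟨m, by omega⟩ : Fin (l + 1))]
      · simp
      · intro j _ hj
        have : ¬ (((0 : Fin (l+1)) : ℕ) = 0 ∧ (j : ℕ) = m) := by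
          simp; intro h; exact hj (by ext; simp [h])
        simp only [this, if_false]
      · simp
    · intro i _ hi
      apply Finset.sum_eq_zero
      intro j _
      have : ¬ ((i : ℕ) = 0 ∧ (j : ℕ) = m) := by
        intro h; exact hi (by ext; simp [h.1])
      simp only [this, if_false]
    · simp
  have e2 : (∑ i : Fin (l + 1), ∑ j : Fin (l + 1),
      if ((i : ℕ) = m ∧ (j : ℕ) = 0) then X i * X j else (0 : Amv))
        = X (⟨m, by omega⟩ : Fin (l + 1)) * X (0 : Fin (l + 1)) := by
    rw [Finset.sum_eq_single (⟨m, by omega⟩ : Fin (l + 1))]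
    · rw [Finset.sum_eq_single (0 : Fin (l + 1))]
      · simp
      · intro j _ hj
        have : ¬ ((j : ℕ) = 0) := by
          intro h; exact hj (by ext; simp [h])
        simp [this]
      · simp
    · intro i _ hi
      apply Finset.sum_eq_zero
      intro j _
      have : ¬ ((i : ℕ) = m ∧ (j : ℕ) = 0) := by
        intro h; exact hi (by ext; simp [h.1])
      simp only [this, if_false]
    · simp
  rw [e1, e2]; ring

lemma two_mem_T : (2 : Amv) ∈ Tring l :=
  T_of_mem l (by simpa using (subR l).algebraMap_mem (2 : ℂ))

lemma T_X0_mul (hl : 1 ≤ l) : ∀ m : ℕ, (hm : m ≤ l) →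
    X (0 : Fin (l + 1)) * X (⟨m, by omega⟩ : Fin (l + 1)) ∈ Tring l := by
  intro m
  induction m using Nat.strong_induction_on with
  | _ m ih =>
    intro hm
    rcases Nat.eq_zero_or_pos m with rfl | hm1
    · have h0 : X (0 : Fin (l + 1)) * X (⟨0, by omega⟩ : Fin (l + 1)) = cOf l 0 := by
        rw [cOf_zero]; congr 1
      rw [h0]
      exact T_of_mem l (cOf_mem_subR l 0 (by omega))
    · -- use cOf_split
      have hsplit := cOf_split l m hm1 hm
      have hsum : (∑ i : Fin (l + 1), ∑ j : Fin (l + 1),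
          if ((i : ℕ) ≠ 0 ∧ (j : ℕ) ≠ 0 ∧ (i : ℕ) + (j : ℕ) = m) then X i * X j else 0)
            ∈ Tring l := by
        apply Subring.sum_mem
        intro i _
        apply Subring.sum_mem
        intro j _
        split_ifs with h
        · obtain ⟨hi0, hj0, hijm⟩ := h
          -- X i * X j = (X 0 * X i) * (X 0 * X j) / (X 0 * X 0)
          have hiT : X (0 : Fin (l + 1)) * X i ∈ Tring l := by
            have := ih (i : ℕ) (by omega) (by omega)
            have hfix : (⟨(i : ℕ), by omega⟩ : Fin (l + 1)) = i := by ext; rfl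
            rwa [hfix] at this
          have hjT : X (0 : Fin (l + 1)) * X j ∈ Tring l := by
            have := ih (j : ℕ) (by omega) (by omega)
            have hfix : (⟨(j : ℕ), by omega⟩ : Fin (l + 1)) = j := by ext; rfl
            rwa [hfix] at this
          apply T_div l (t := X (0 : Fin (l + 1)) * X (0 : Fin (l + 1)))
          · have : (X i * X j : Amv) * (X (0 : Fin (l+1)) * X (0 : Fin (l+1)))
                = (X (0 : Fin (l+1)) * X i) * (X (0 : Fin (l+1)) * X j) := by ring
            rw [this]
            exact mul_mem hiT hjT
          · rw [← cOf_zero]; exact T_of_mem l (cOf_mem_subR l 0 (by omega))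
          · exact mul_ne_zero (MvPolynomial.X_ne_zero _) (MvPolynomial.X_ne_zero _)
        · exact zero_mem _
      have hc : cOf l m ∈ Tring l := T_of_mem l (cOf_mem_subR l m (by omega))
      have h2 : 2 * (X (0 : Fin (l + 1)) * X (⟨m, by omega⟩ : Fin (l + 1))) ∈ Tring l := by
        have := sub_mem hc hsum
        rw [hsplit] at this
        simpa using this
      apply T_div l (t := (2 : Amv)) _ (two_mem_T l) two_ne_zero
      have : (X (0 : Fin (l + 1)) * X (⟨m, by omega⟩ : Fin (l + 1)) : Amv) * 2
          = 2 * (X (0 : Fin (l + 1)) * X (⟨m, by omega⟩ : Fin (l + 1))) := by ring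
      rw [this]
      exact h2

lemma T_X (hl : 1 ≤ l) (k : Fin (l + 1)) : (X k : Amv) ∈ Tring l := by
  have hb : (X (Fin.last l) : Amv) ∈ Tring l := T_of_mem l (b_mem_subR l)
  have hX0 : (X (0 : Fin (l + 1)) : Amv) ∈ Tring l := by
    apply T_div l (t := X (Fin.last l)) _ hb (MvPolynomial.X_ne_zero _)
    have : (Fin.last l) = (⟨l, by omega⟩ : Fin (l + 1)) := rfl
    rw [this]
    exact T_X0_mul l hl l le_rfl
  apply T_div l (t := X (0 : Fin (l + 1))) _ hX0 (MvPolynomial.X_ne_zero _)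
  have h1 : (X k : Amv) * X (0 : Fin (l + 1)) = X (0 : Fin (l + 1)) * X (⟨(k : ℕ), by omega⟩ : Fin (l + 1)) := by
    have : (⟨(k : ℕ), by omega⟩ : Fin (l + 1)) = k := by ext; rfl
    rw [this]; ring
  rw [h1]
  exact T_X0_mul l hl (k : ℕ) (by have := k.2; omega)

lemma T_all (hl : 1 ≤ l) (x : Amv) : x ∈ Tring l := by
  induction x using MvPolynomial.induction_on with
  | C a => exact T_of_mem l ((subR l).algebraMap_mem a)
  | add p q hp hq => exact add_mem hp hq
  | mul_X p i hp => exact mul_mem hp (T_X l hl i)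

end Integral

/-- Let `A = ℂ[a₁,…,a_l,b]` and let `R` be the subalgebra generated by the
coefficients `c₀, …, c_{2l-1}` of `(a₁ u^l + ⋯ + a_l u + b)²` together with `b`.
Then `R` and `A` have the same field of fractions `ℂ(a₁,…,a_l,b)`, `A` is integral
over `R`, and `A` is the integral closure of `R` in this fraction field. -/
theorem end_block_normalization (l : ℕ) (hl : 1 ≤ l) :
    (∀ x : FractionRing (MvPolynomial (Fin (l + 1)) ℂ),
      ∃ r s : MvPolynomial (Fin (l + 1)) ℂ, r ∈ subR l ∧ s ∈ subR l ∧ s ≠ 0 ∧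
        x * algebraMap (MvPolynomial (Fin (l + 1)) ℂ)
              (FractionRing (MvPolynomial (Fin (l + 1)) ℂ)) s
          = algebraMap (MvPolynomial (Fin (l + 1)) ℂ)
              (FractionRing (MvPolynomial (Fin (l + 1)) ℂ)) r) ∧
    (∀ x : MvPolynomial (Fin (l + 1)) ℂ,
      ((Subalgebra.val (subR l)).toRingHom).IsIntegralElem x) ∧
    (∀ x : FractionRing (MvPolynomial (Fin (l + 1)) ℂ),
      ((algebraMap (MvPolynomial (Fin (l + 1)) ℂ)
            (FractionRing (MvPolynomial (Fin (l + 1)) ℂ))).comp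
          (Subalgebra.val (subR l)).toRingHom).IsIntegralElem x →
        ∃ a : MvPolynomial (Fin (l + 1)) ℂ,
          algebraMap (MvPolynomial (Fin (l + 1)) ℂ)
              (FractionRing (MvPolynomial (Fin (l + 1)) ℂ)) a = x) := by
  refine ⟨?_, ?_, ?_⟩
  · intro x
    obtain ⟨⟨p, q⟩, hx⟩ :=
      IsLocalization.surj (nonZeroDivisors (MvPolynomial (Fin (l + 1)) ℂ)) x
    obtain ⟨rp, sp, hrp, hsp, hsp0, hp⟩ := T_all l hl p
    obtain ⟨rq, sq, hrq, hsq, hsq0, hq⟩ := T_all l hl (q : MvPolynomial (Fin (l + 1)) ℂ)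
    have hq0 : (q : MvPolynomial (Fin (l + 1)) ℂ) ≠ 0 := nonZeroDivisors.ne_zero q.2
    refine ⟨rp * sq, rq * sp, mul_mem hrp hsq, mul_mem hrq hsp, ?_, ?_⟩
    · rw [← hq]
      exact mul_ne_zero (mul_ne_zero hq0 hsq0) hsp0
    · have key : (rq * sp : MvPolynomial (Fin (l + 1)) ℂ)
          = (q : MvPolynomial (Fin (l + 1)) ℂ) * (sq * sp) := by
        rw [← hq]; ring
      rw [key, map_mul, ← mul_assoc, hx, ← map_mul]
      congr 1
      rw [← hp]; ring
  · intro x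
    exact isIntegral_all l hl x
  · intro x hx
    obtain ⟨p, pmonic, hp⟩ := hx
    have hint : IsIntegral (MvPolynomial (Fin (l + 1)) ℂ) x := by
      refine ⟨p.map (Subalgebra.val (subR l)).toRingHom, pmonic.map _, ?_⟩
      rw [Polynomial.eval₂_map]
      exact hp
    exact IsIntegrallyClosed.isIntegral_iff.mp hint
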